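/- Fix integers 1 ≤ i ≤ n−1 and let D^n_i be the set of continuous functions ζ on (0,∞) with support bounded from above such that lim_{t→0} t^{n−i} ζ(t) = 0 and lim_{t→0} ∫_t^∞ ζ(s) s^{n−i−1} ds exists and is finite. For ζ ∈ D^n_i with support contained in (0,R], define ζ^r(t) := ζ(t) for t > r and ζ^r(t) := ζ(r) for 0 ≤ t ≤ r. Then ζ^r is continuous with compact support, belongs to D^n_i with support in (0,R], and ‖ζ − ζ^r‖ → 0 as r → 0, where ‖ζ‖ := sup_{t>0} |(n−i)∫_t^∞ ζ(s)s^{n−i−1}ds| + sup_{t>0} |t^{n−i}ζ(t) + (n−i)∫_t^∞ ζ(s)s^{n−i−1}ds|. -/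

import Mathlib

open MeasureTheory Filter

/-- The class `D^n_i`: continuous functions on `(0,∞)` with support bounded from above,
such that `t^{n-i} ζ(t) → 0` as `t → 0` and `∫_t^∞ ζ(s) s^{n-i-1} ds` has a finite limit
as `t → 0`. -/
def Dni (n i : ℕ) (ζ : ℝ → ℝ) : Prop :=
  ContinuousOn ζ (Set.Ioi 0) ∧
  (∃ R : ℝ, ∀ t > R, ζ t = 0) ∧
  Tendsto (fun t : ℝ => t ^ (n - i) * ζ t) (nhdsWithin 0 (Set.Ioi 0)) (nhds 0) ∧
  ∃ L : ℝ, Tendsto (fun t : ℝ => ∫ s in Set.Ioi t, ζ s * s ^ (n - i - 1))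
    (nhdsWithin 0 (Set.Ioi 0)) (nhds L)

/-- The norm `‖ζ‖` on `D^n_i`. -/
noncomputable def dnorm (n i : ℕ) (ζ : ℝ → ℝ) : ℝ :=
  (⨆ t : Set.Ioi (0:ℝ), |(n - i : ℝ) * ∫ s in Set.Ioi (t:ℝ), ζ s * s ^ (n - i - 1)|) +
  (⨆ t : Set.Ioi (0:ℝ),
    |(t:ℝ) ^ (n - i) * ζ t + (n - i : ℝ) * ∫ s in Set.Ioi (t:ℝ), ζ s * s ^ (n - i - 1)|)

lemma aux_integrableOn {f : ℝ → ℝ} {B : ℝ} (hf : ContinuousOn f (Set.Ioi 0))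
    (hB : ∀ s > B, f s = 0) {t : ℝ} (ht : 0 < t) (k : ℕ) :
    IntegrableOn (fun s => f s * s ^ k) (Set.Ioi t) := by
  have htB' : t ≤ max B t := le_max_right _ _
  rw [← Set.Ioc_union_Ioi_eq_Ioi htB']
  apply IntegrableOn.union
  · have hcont : ContinuousOn (fun s => f s * s ^ k) (Set.Icc t (max B t)) :=
      (hf.mono (fun x hx => lt_of_lt_of_le ht hx.1)).mul ((continuous_pow k).continuousOn)
    exact hcont.integrableOn_Icc.mono_set Set.Ioc_subset_Icc_self
  · exact (integrableOn_zero (s := Set.Ioi (max B t))).congr_fun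
      (fun s hs => by simp [hB s (lt_of_le_of_lt (le_max_left B t) hs)])
      measurableSet_Ioi

lemma aux_split {g : ℝ → ℝ} {t r : ℝ} (htr : t ≤ r)
    (hint : IntegrableOn g (Set.Ioi t)) :
    ∫ s in Set.Ioi t, g s = (∫ s in Set.Ioc t r, g s) + ∫ s in Set.Ioi r, g s := by
  rw [← Set.Ioc_union_Ioi_eq_Ioi htr,
    setIntegral_union (Set.Ioc_disjoint_Ioi le_rfl) measurableSet_Ioi
      (hint.mono_set (by rw [← Set.Ioc_union_Ioi_eq_Ioi htr]; exact Set.subset_union_left))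
      (hint.mono_set (by rw [← Set.Ioc_union_Ioi_eq_Ioi htr]; exact Set.subset_union_right))]

lemma aux_pow_integral (k : ℕ) {t r : ℝ} (htr : t ≤ r) :
    ∫ s in Set.Ioc t r, s ^ k = (r ^ (k+1) - t ^ (k+1)) / (k+1) := by
  rw [← intervalIntegral.integral_of_le htr, integral_pow]

lemma trunc_eq_max (ζ : ℝ → ℝ) (r : ℝ) :
    (fun t => if r < t then ζ t else ζ r) = fun t => ζ (max r t) := by
  funext t
  rcases lt_or_ge r t with h | h
  · rw [if_pos h, max_eq_right h.le]
  · rw [if_neg (not_lt.mpr h), max_eq_left h]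

lemma trunc_contOn {ζ : ℝ → ℝ} (hcont : ContinuousOn ζ (Set.Ioi 0)) {r : ℝ} (hr : 0 < r) :
    ContinuousOn (fun t => if r < t then ζ t else ζ r) (Set.Ici 0) := by
  rw [trunc_eq_max]
  exact hcont.comp ((continuous_const.max continuous_id).continuousOn)
    (fun x _ => lt_of_lt_of_le hr (le_max_left _ _))

lemma trunc_supp {ζ : ℝ → ℝ} {R : ℝ} (hsupp : ∀ s > R, ζ s = 0) {r : ℝ} :
    ∀ s > max R r, (if r < s then ζ s else ζ r) = 0 := by
  intro s hs
  rw [if_pos (lt_of_le_of_lt (le_max_right R r) hs)]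
  exact hsupp s (lt_of_le_of_lt (le_max_left R r) hs)

lemma trunc_integral {ζ : ℝ → ℝ} {R : ℝ} (hcont : ContinuousOn ζ (Set.Ioi 0))
    (hsupp : ∀ s > R, ζ s = 0) (k : ℕ) {t r : ℝ} (ht : 0 < t) (hr : 0 < r) (htr : t ≤ r) :
    ∫ s in Set.Ioi t, (if r < s then ζ s else ζ r) * s ^ k
      = ζ r * ((r ^ (k+1) - t ^ (k+1)) / (k+1)) + ∫ s in Set.Ioi r, ζ s * s ^ k := by
  have hint : IntegrableOn (fun s => (if r < s then ζ s else ζ r) * s ^ k) (Set.Ioi t) :=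
    aux_integrableOn ((trunc_contOn hcont hr).mono Set.Ioi_subset_Ici_self)
      (trunc_supp hsupp) ht k
  rw [aux_split htr hint]
  congr 1
  · rw [setIntegral_congr_fun measurableSet_Ioc
      (g := fun s => ζ r * s ^ k) (fun s hs => by rw [if_neg (not_lt.mpr hs.2)]),
      MeasureTheory.integral_const_mul, aux_pow_integral k htr]
  · exact setIntegral_congr_fun measurableSet_Ioi
      (fun s hs => by rw [if_pos (Set.mem_Ioi.mp hs)])

lemma diff_integral {ζ : ℝ → ℝ} {R : ℝ} (hcont : ContinuousOn ζ (Set.Ioi 0))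
    (hsupp : ∀ s > R, ζ s = 0) (k : ℕ) {t r : ℝ} (ht : 0 < t) (hr : 0 < r) (htr : t ≤ r) :
    ∫ s in Set.Ioi t, (ζ s - if r < s then ζ s else ζ r) * s ^ k
      = (∫ s in Set.Ioi t, ζ s * s ^ k) - ζ r * ((r ^ (k+1) - t ^ (k+1)) / (k+1))
        - ∫ s in Set.Ioi r, ζ s * s ^ k := by
  have h1 : IntegrableOn (fun s => ζ s * s ^ k) (Set.Ioi t) :=
    aux_integrableOn hcont hsupp ht k
  have h2 : IntegrableOn (fun s => (if r < s then ζ s else ζ r) * s ^ k) (Set.Ioi t) :=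
    aux_integrableOn ((trunc_contOn hcont hr).mono Set.Ioi_subset_Ici_self)
      (trunc_supp hsupp) ht k
  have heq : ∀ s : ℝ, (ζ s - if r < s then ζ s else ζ r) * s ^ k
      = ζ s * s ^ k - (if r < s then ζ s else ζ r) * s ^ k := fun s => by ring
  simp_rw [heq]
  rw [integral_sub h1 h2, trunc_integral hcont hsupp k ht hr htr]
  ring

lemma diff_integral_zero {ζ : ℝ → ℝ} (k : ℕ) {t r : ℝ} (hrt : r ≤ t) :
    ∫ s in Set.Ioi t, (ζ s - if r < s then ζ s else ζ r) * s ^ k = 0 := by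
  rw [setIntegral_congr_fun measurableSet_Ioi
    (g := fun _ => (0:ℝ)) (fun s hs => by
      rw [if_pos (lt_of_le_of_lt hrt hs)]; ring),
    integral_zero]

lemma tri3 (a b c : ℝ) : |a - b - c| ≤ |a| + |b| + |c| := by
  have := abs_add_three a (-b) (-c)
  simpa [sub_eq_add_neg] using this

lemma tri4 (a b c d : ℝ) : |a + b - c - d| ≤ |a| + |b| + |c| + |d| := by
  have h1 := abs_add_three (a + b) (-c) (-d)
  have h2 := abs_add_le a b
  simp only [abs_neg, sub_eq_add_neg] at *
  linarith

set_option maxHeartbeats 2000000 in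
/-- the truncation `ζ^r` is continuous with compact support, belongs to
`D^n_i` with support in `(0,R]`, and `‖ζ − ζ^r‖ → 0` as `r → 0`. -/
theorem stmt3 (n i : ℕ) (h1 : 1 ≤ i) (h2 : i ≤ n - 1) (R : ℝ) (hR : 0 < R)
    (ζ : ℝ → ℝ) (hζ : Dni n i ζ) (hsupp : ∀ t > R, ζ t = 0) :
    (∀ r > (0:ℝ),
      ContinuousOn (fun t => if r < t then ζ t else ζ r) (Set.Ici 0) ∧
      (∀ t > R, (if r < t then ζ t else ζ r) = 0) ∧
      Dni n i (fun t => if r < t then ζ t else ζ r)) ∧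
    Tendsto (fun r : ℝ => dnorm n i (fun t => ζ t - if r < t then ζ t else ζ r))
      (nhdsWithin 0 (Set.Ioi 0)) (nhds 0) := by
  obtain ⟨hcont, -, hP, L, hG⟩ := hζ
  have hn : i < n := by omega
  have hkm : n - i - 1 + 1 = n - i := by omega
  have hm1 : 1 ≤ n - i := by omega
  have hc : ((n:ℝ) - (i:ℝ)) = ((n - i : ℕ):ℝ) := (Nat.cast_sub hn.le).symm
  have hdiv : ((n - i - 1 : ℕ):ℝ) + 1 = ((n - i : ℕ):ℝ) := by
    rw [← Nat.cast_add_one, hkm]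
  constructor
  · intro r hr
    refine ⟨trunc_contOn hcont hr, ?_, ?_⟩
    · intro t ht
      rcases lt_or_ge r t with h | h
      · rw [if_pos h]; exact hsupp t ht
      · rw [if_neg (not_lt.mpr h)]
        exact hsupp r (lt_of_lt_of_le ht h)
    · refine ⟨(trunc_contOn hcont hr).mono Set.Ioi_subset_Ici_self,
        ⟨max R r, trunc_supp hsupp⟩, ?_, ?_⟩
      · have h0 : Tendsto (fun t : ℝ => t ^ (n - i) * ζ r)
            (nhdsWithin 0 (Set.Ioi 0)) (nhds 0) := by
          have h0' : Tendsto (fun t : ℝ => t ^ (n - i) * ζ r) (nhds 0)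
              (nhds (0 ^ (n - i) * ζ r)) :=
            ((continuous_pow (n - i)).mul continuous_const).tendsto 0
          simpa [zero_pow (by omega : n - i ≠ 0)] using
            h0'.mono_left (nhdsWithin_le_nhds (s := Set.Ioi 0))
        apply h0.congr'
        filter_upwards [mem_nhdsWithin_of_mem_nhds (Iio_mem_nhds hr)] with t ht
        rw [if_neg (not_lt.mpr (le_of_lt ht))]
      · refine ⟨ζ r * ((r ^ (n - i - 1 + 1) - 0 ^ (n - i - 1 + 1)) / ((n - i - 1 : ℕ) + 1))
            + ∫ s in Set.Ioi r, ζ s * s ^ (n - i - 1), ?_⟩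
        have hcont2 : Continuous (fun t : ℝ =>
            ζ r * ((r ^ (n - i - 1 + 1) - t ^ (n - i - 1 + 1)) / ((n - i - 1 : ℕ) + 1))
              + ∫ s in Set.Ioi r, ζ s * s ^ (n - i - 1)) := by
          fun_prop
        have h0 := (hcont2.tendsto 0).mono_left (nhdsWithin_le_nhds (s := Set.Ioi 0))
        apply h0.congr'
        filter_upwards [mem_nhdsWithin_of_mem_nhds (Iio_mem_nhds hr),
          self_mem_nhdsWithin] with t ht1 ht2
        exact (trunc_integral hcont hsupp _ ht2 hr (le_of_lt ht1)).symm
  · haveI : Nonempty (Set.Ioi (0:ℝ)) := ⟨⟨1, Set.mem_Ioi.mpr one_pos⟩⟩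
    rw [Metric.tendsto_nhdsWithin_nhds] at hP hG ⊢
    intro ε hε
    set m : ℕ := n - i with hm
    set ε' : ℝ := ε / (4 * m + 4) with hε'def
    have hε' : 0 < ε' := by positivity
    obtain ⟨δ₁, hδ₁, H1⟩ := hP ε' hε'
    obtain ⟨δ₂, hδ₂, H2⟩ := hG ε' hε'
    refine ⟨min δ₁ δ₂, lt_min hδ₁ hδ₂, ?_⟩
    intro r hrmem hrd
    have hr : 0 < r := hrmem
    rw [Real.dist_eq, sub_zero] at hrd
    rw [abs_of_pos hr] at hrd
    -- two pointwise bounds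
    set G : ℝ → ℝ := fun t => ∫ s in Set.Ioi t, ζ s * s ^ (n - i - 1) with hGdef
    have key1 : ∀ t : ℝ, 0 < t → t < r → |G t - L| < ε' ∧ |t ^ (n - i) * ζ t| < ε' := by
      intro t ht htr
      have hd : dist t 0 < δ₂ := by
        rw [Real.dist_eq, sub_zero, abs_of_pos ht]
        exact htr.trans (lt_of_lt_of_le hrd (min_le_right _ _))
      have hd' : dist t 0 < δ₁ := by
        rw [Real.dist_eq, sub_zero, abs_of_pos ht]
        exact htr.trans (lt_of_lt_of_le hrd (min_le_left _ _))
      constructor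
      · have := H2 ht hd
        rwa [Real.dist_eq] at this
      · have := H1 ht hd'
        rwa [Real.dist_eq, sub_zero] at this
    have keyr : |G r - L| < ε' ∧ |r ^ (n - i) * ζ r| < ε' := by
      have hd : dist r 0 < δ₂ := by
        rw [Real.dist_eq, sub_zero, abs_of_pos hr]
        exact lt_of_lt_of_le hrd (min_le_right _ _)
      have hd' : dist r 0 < δ₁ := by
        rw [Real.dist_eq, sub_zero, abs_of_pos hr]
        exact lt_of_lt_of_le hrd (min_le_left _ _)
      exact ⟨by have := H2 hr hd; rwa [Real.dist_eq] at this,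
        by have := H1 hr hd'; rwa [Real.dist_eq, sub_zero] at this⟩
    have hm0 : ((m:ℕ):ℝ) ≠ 0 := by positivity
    -- bound the first sup
    have sup1 : (⨆ t : Set.Ioi (0:ℝ), |((n:ℝ) - i) *
        ∫ s in Set.Ioi (t:ℝ), (ζ s - if r < s then ζ s else ζ r) * s ^ (n - i - 1)|)
        ≤ (2 * m + 1) * ε' := by
      apply ciSup_le
      rintro ⟨t, ht⟩
      simp only
      rcases lt_or_ge t r with htr | hrt
      · rw [diff_integral hcont hsupp (n - i - 1) ht hr htr.le, hc, hkm, hdiv]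
        have hb1 := (key1 t ht htr).1
        have hb2 := keyr.1
        have hb3 := keyr.2
        have heq : ((m:ℕ):ℝ) * (G t - ζ r * ((r ^ m - t ^ m) / (m:ℕ)) - G r)
            = (m:ℝ) * (G t - L) - (m:ℝ) * (G r - L) - ζ r * (r ^ m - t ^ m) := by
          have hx : ((m:ℕ):ℝ) * ((r ^ m - t ^ m) / ((m:ℕ):ℝ)) = r ^ m - t ^ m :=
            mul_div_cancel₀ _ hm0
          linear_combination (-ζ r) * hx
        rw [heq]
        have h3 : |ζ r * (r ^ m - t ^ m)| ≤ |r ^ m * ζ r| := by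
          rw [abs_mul, abs_mul, mul_comm (|r ^ m|)]
          apply mul_le_mul_of_nonneg_left _ (abs_nonneg _)
          rw [abs_of_nonneg (sub_nonneg.mpr (pow_le_pow_left₀ ht.le htr.le m)),
            abs_of_nonneg (pow_nonneg hr.le m)]
          have := pow_nonneg (Set.mem_Ioi.mp ht).le m
          linarith
        have e1 : |(m:ℝ) * (G t - L)| = (m:ℝ) * |G t - L| := by
          rw [abs_mul, abs_of_nonneg (by positivity)]
        have e2 : |(m:ℝ) * (G r - L)| = (m:ℝ) * |G r - L| := by
          rw [abs_mul, abs_of_nonneg (by positivity)]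
        have htri := tri3 ((m:ℝ) * (G t - L)) ((m:ℝ) * (G r - L)) (ζ r * (r ^ m - t ^ m))
        rw [e1, e2] at htri
        have hmnn : (0:ℝ) ≤ (m:ℝ) := Nat.cast_nonneg m
        nlinarith [hb1, hb2, hb3, h3, htri]
      · rw [diff_integral_zero (n - i - 1) hrt]
        simp only [mul_zero, abs_zero]
        positivity
    -- bound the second sup
    have sup2 : (⨆ t : Set.Ioi (0:ℝ), |(t:ℝ) ^ (n - i) * (ζ t - if r < t then ζ t else ζ r)
        + ((n:ℝ) - i) * ∫ s in Set.Ioi (t:ℝ), (ζ s - if r < s then ζ s else ζ r) * s ^ (n - i - 1)|)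
        ≤ (2 * m + 2) * ε' := by
      apply ciSup_le
      rintro ⟨t, ht⟩
      simp only
      rcases lt_or_ge t r with htr | hrt
      · rw [diff_integral hcont hsupp (n - i - 1) ht hr htr.le, hc, hkm, hdiv,
          if_neg (not_lt.mpr htr.le)]
        have hb1 := (key1 t ht htr).1
        have hb2 := keyr.1
        have hb3 := keyr.2
        have hb4 := (key1 t ht htr).2
        have heq : t ^ m * (ζ t - ζ r) + ((m:ℕ):ℝ) * (G t - ζ r * ((r ^ m - t ^ m) / (m:ℕ)) - G r)
            = t ^ m * ζ t + (m:ℝ) * (G t - L) - r ^ m * ζ r - (m:ℝ) * (G r - L) := by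
          have hx : ((m:ℕ):ℝ) * ((r ^ m - t ^ m) / ((m:ℕ):ℝ)) = r ^ m - t ^ m :=
            mul_div_cancel₀ _ hm0
          linear_combination (-ζ r) * hx
        rw [heq]
        have htri := tri4 (t ^ m * ζ t) ((m:ℝ) * (G t - L)) (r ^ m * ζ r) ((m:ℝ) * (G r - L))
        have e1 : |(m:ℝ) * (G t - L)| = (m:ℝ) * |G t - L| := by
          rw [abs_mul, abs_of_nonneg (by positivity)]
        have e2 : |(m:ℝ) * (G r - L)| = (m:ℝ) * |G r - L| := by
          rw [abs_mul, abs_of_nonneg (by positivity)]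
        rw [e1, e2] at htri
        have hmnn : (0:ℝ) ≤ (m:ℝ) := Nat.cast_nonneg m
        nlinarith [hb1, hb2, hb3, hb4, htri]
      · rw [diff_integral_zero (n - i - 1) hrt]
        have hval : ζ t - (if r < t then ζ t else ζ r) = 0 := by
          rcases eq_or_lt_of_le hrt with h | h
          · rw [if_neg (not_lt.mpr h.ge), ← h, sub_self]
          · rw [if_pos h, sub_self]
        rw [hval]
        simp only [mul_zero, zero_add, abs_zero]
        positivity
    -- combine
    have hnn : 0 ≤ dnorm n i (fun t => ζ t - if r < t then ζ t else ζ r) := by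
      unfold dnorm
      exact add_nonneg (Real.iSup_nonneg (fun t => abs_nonneg _))
        (Real.iSup_nonneg (fun t => abs_nonneg _))
    rw [Real.dist_eq, sub_zero, abs_of_nonneg hnn]
    unfold dnorm
    have hfin : (4 * (m:ℝ) + 3) * ε' < ε := by
      have : (4 * (m:ℝ) + 4) * ε' = ε := by
        rw [hε'def]; field_simp
      nlinarith [hε']
    calc _ ≤ (2 * (m:ℝ) + 1) * ε' + (2 * m + 2) * ε' := add_le_add sup1 sup2
      _ = (4 * (m:ℝ) + 3) * ε' := by ring
      _ < ε := hfin
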